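/- Any symmetric integer matrix A is congruent over ℤ (A ↦ PᵀAP with P ∈ GLₙ(ℤ)) to a block sum B ⊕ O of a nonsingular symmetric integer matrix B and a zero matrix O. -/

import Mathlib

open Matrix

private lemma stmt13_entry {n : ℕ} (A P : Matrix (Fin n) (Fin n) ℤ) (i j : Fin n) :
    (Pᵀ * A * P) i j = (fun a => P a i) ⬝ᵥ (A *ᵥ fun b => P b j) := by
  simp only [Matrix.mul_apply, Matrix.transpose_apply, Matrix.mulVec, dotProduct,
    Finset.mul_sum, Finset.sum_mul]
  rw [Finset.sum_comm]
  exact Finset.sum_congr rfl fun c _ => Finset.sum_congr rfl fun d _ => by ring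

private lemma stmt13_dot_sum {ι : Type*} (s : Finset ι) {n : ℕ} (y : Fin n → ℤ)
    (u : ι → Fin n → ℤ) : y ⬝ᵥ (∑ i ∈ s, u i) = ∑ i ∈ s, y ⬝ᵥ u i := by
  simp only [dotProduct, Finset.sum_apply, Finset.mul_sum]
  exact Finset.sum_comm

private lemma stmt13_sum_dot {ι : Type*} (s : Finset ι) {n : ℕ} (y : Fin n → ℤ)
    (u : ι → Fin n → ℤ) : (∑ i ∈ s, u i) ⬝ᵥ y = ∑ i ∈ s, u i ⬝ᵥ y := by
  simp only [dotProduct, Finset.sum_apply, Finset.sum_mul]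
  exact Finset.sum_comm

/-- Kyle's theorem: any symmetric integer matrix is congruent over `ℤ` to the
block sum of a nonsingular symmetric integer matrix and a zero matrix. -/
theorem stmt13 (n : ℕ) (A : Matrix (Fin n) (Fin n) ℤ) (hA : Aᵀ = A) :
    ∃ (k l : ℕ) (e : (Fin k ⊕ Fin l) ≃ Fin n)
      (B : Matrix (Fin k) (Fin k) ℤ) (P : Matrix (Fin n) (Fin n) ℤ),
        IsUnit P.det ∧ Bᵀ = B ∧ B.det ≠ 0 ∧
        Pᵀ * A * P =
          (Matrix.reindex e e) (Matrix.fromBlocks B 0 0 (0 : Matrix (Fin l) (Fin l) ℤ)) := by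
  classical
  set N : Submodule ℤ (Fin n → ℤ) := LinearMap.ker A.mulVecLin with hNdef
  obtain ⟨l, ⟨bM, bN, f, a, snf⟩⟩ := N.smithNormalForm (Pi.basisFun ℤ (Fin n))
  have ha : ∀ i, a i ≠ 0 := by
    intro i hai
    apply bN.ne_zero i
    have h := snf i
    rw [hai, zero_smul] at h
    exact Subtype.ext h
  have hbMf : ∀ i, bM (f i) ∈ N := by
    intro i
    have h1 : A.mulVecLin ((a i : ℤ) • bM (f i)) = 0 := by
      rw [← snf i]; exact (bN i).2
    rw [_root_.map_smul, smul_eq_zero] at h1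
    exact h1.resolve_left (ha i)
  set k := n - l with hk
  set p : Fin n → Prop := fun x => x ∈ Set.range ⇑f with hp
  set eL : Fin l ≃ {x // p x} := Equiv.ofInjective f f.injective with hEL
  have hcard : Fintype.card {x : Fin n // ¬ p x} = k := by
    rw [Fintype.card_subtype_compl]
    have h : Fintype.card {x // p x} = l := by
      rw [← Fintype.card_congr eL, Fintype.card_fin]
    rw [h, Fintype.card_fin]
  set eK : Fin k ≃ {x : Fin n // ¬ p x} := (Fintype.equivFinOfCardEq hcard).symm with hEK
  set e : (Fin k ⊕ Fin l) ≃ Fin n :=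
    ((eK.sumCongr eL).trans (Equiv.sumComm _ _)).trans (Equiv.sumCompl p) with he
  have he_inr : ∀ j, e (Sum.inr j) = f j := fun j => rfl
  set b2 : Module.Basis (Fin k ⊕ Fin l) ℤ (Fin n → ℤ) := bM.reindex e.symm with hb2
  have hb2_apply : ∀ s, b2 s = bM (e s) := by
    intro s; rw [hb2, Module.Basis.reindex_apply, Equiv.symm_symm]
  have hb2_inr : ∀ j, b2 (Sum.inr j) = bM (f j) := by
    intro j; rw [hb2_apply, he_inr]
  have hker : ∀ j, A *ᵥ b2 (Sum.inr j) = 0 := by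
    intro j
    have h := hbMf j
    rw [← hb2_inr] at h
    exact h
  have hNspan : ∀ x ∈ N, x ∈ Submodule.span ℤ (⇑b2 '' Set.range Sum.inr) := by
    intro x hx
    have h1 : (⟨x, hx⟩ : N) ∈ Submodule.span ℤ (Set.range ⇑bN) := by
      rw [bN.span_eq]; trivial
    have h2 := Submodule.mem_map_of_mem (f := N.subtype) h1
    rw [Submodule.map_span, ← Set.range_comp] at h2
    refine Submodule.span_le.mpr ?_ h2
    rintro _ ⟨i, rfl⟩
    simp only [Function.comp_apply, Submodule.coe_subtype]
    rw [snf i, ← hb2_inr i]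
    exact Submodule.smul_mem _ _ (Submodule.subset_span ⟨Sum.inr i, ⟨i, rfl⟩, rfl⟩)
  set b3 : Module.Basis (Fin n) ℤ (Fin n → ℤ) := b2.reindex e with hb3
  have hb3_apply : ∀ i, b3 i = b2 (e.symm i) := fun i => Module.Basis.reindex_apply _ _ _
  set P : Matrix (Fin n) (Fin n) ℤ := (Pi.basisFun ℤ (Fin n)).toMatrix ⇑b3 with hPdef
  have hP : ∀ i j, P i j = b3 j i := by
    intro i j
    simp [hPdef, Module.Basis.toMatrix_apply]
  have hPinv : Invertible P := (Pi.basisFun ℤ (Fin n)).invertibleToMatrix b3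
  have hPunit : IsUnit P.det := Matrix.isUnit_det_of_invertible P
  have hPAP : ∀ i j, (Pᵀ * A * P) i j = b3 i ⬝ᵥ (A *ᵥ b3 j) := by
    have hfun : ∀ j, (fun a => P a j) = b3 j := by
      intro j; funext c; rw [hP]
    intro i j
    rw [stmt13_entry A P i j, hfun, hfun]
  have hdot : ∀ x y : Fin n → ℤ, A *ᵥ x = 0 → x ⬝ᵥ (A *ᵥ y) = 0 := by
    intro x y hx
    rw [Matrix.dotProduct_mulVec, ← hA, Matrix.vecMul_transpose, hx, zero_dotProduct]
  set B : Matrix (Fin k) (Fin k) ℤ :=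
    Matrix.of (fun i j => b2 (Sum.inl i) ⬝ᵥ (A *ᵥ b2 (Sum.inl j))) with hB
  have hBsymm : Bᵀ = B := by
    ext i j
    rw [Matrix.transpose_apply, hB]
    simp only [Matrix.of_apply]
    rw [Matrix.dotProduct_mulVec, ← hA, Matrix.vecMul_transpose, hA, dotProduct_comm]
  have hmain : Pᵀ * A * P =
      (Matrix.reindex e e) (Matrix.fromBlocks B 0 0 (0 : Matrix (Fin l) (Fin l) ℤ)) := by
    ext i j
    rw [hPAP, Matrix.reindex_apply, Matrix.submatrix_apply, hb3_apply, hb3_apply]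
    rcases hs : e.symm i with s | s <;> rcases ht : e.symm j with t | t
    · rfl
    · rw [Matrix.fromBlocks_apply₁₂, hker, dotProduct_zero]; rfl
    · rw [Matrix.fromBlocks_apply₂₁, hdot _ _ (hker s)]; rfl
    · rw [Matrix.fromBlocks_apply₂₂, hker, dotProduct_zero]; rfl
  have hdet : B.det ≠ 0 := by
    intro hd
    obtain ⟨v, hv, hBv⟩ := (Matrix.exists_mulVec_eq_zero_iff).mpr hd
    set x : Fin n → ℤ := ∑ i, v i • b2 (Sum.inl i) with hx
    have hAxsum : A *ᵥ x = ∑ i, v i • (A *ᵥ b2 (Sum.inl i)) := by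
      rw [hx]
      rw [show ∀ y, A *ᵥ y = A.mulVecLin y from fun _ => rfl]
      rw [map_sum]
      exact Finset.sum_congr rfl fun i _ => by rw [_root_.map_smul]; rfl
    have hAx : ∀ m, b2 m ⬝ᵥ (A *ᵥ x) = 0 := by
      intro m
      rcases m with s | s
      · rw [hAxsum, stmt13_dot_sum]
        have h : ∀ i, b2 (Sum.inl s) ⬝ᵥ (v i • (A *ᵥ b2 (Sum.inl i))) = B s i * v i := by
          intro i
          rw [dotProduct_smul, hB]
          simp only [Matrix.of_apply, smul_eq_mul]
          ring
        rw [Finset.sum_congr rfl fun i _ => h i]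
        have h2 : ∑ i, B s i * v i = (B *ᵥ v) s := rfl
        rw [h2, hBv]
        rfl
      · exact hdot _ _ (hker s)
    have hAx0 : A *ᵥ x = 0 := by
      have hall : ∀ y : Fin n → ℤ, y ⬝ᵥ (A *ᵥ x) = 0 := by
        intro y
        have hy : y = ∑ m, b2.repr y m • b2 m := (b2.sum_repr y).symm
        rw [hy, stmt13_sum_dot]
        refine Finset.sum_eq_zero fun m _ => ?_
        rw [smul_dotProduct, hAx, smul_zero]
      ext i
      have h := hall (Pi.single i 1)
      rwa [single_dotProduct, one_mul] at h
    have hxN : x ∈ N := by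
      rw [hNdef, LinearMap.mem_ker]
      exact hAx0
    have hsupp := (Module.Basis.mem_span_image b2).mp (hNspan x hxN)
    apply hv
    ext i
    have hrepr : b2.repr x (Sum.inl i) = v i := by
      rw [hx, map_sum]
      rw [Finsupp.finset_sum_apply]
      have h3 : ∀ i', (b2.repr (v i' • b2 (Sum.inl i'))) (Sum.inl i)
          = if i' = i then v i' else 0 := by
        intro i'
        rw [_root_.map_smul, Module.Basis.repr_self]
        simp [Finsupp.single_apply]
      rw [Finset.sum_congr rfl fun i' _ => h3 i']
      simp
    have hz : b2.repr x (Sum.inl i) = 0 := by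
      by_contra hne
      have hmem : Sum.inl i ∈ (b2.repr x).support := Finsupp.mem_support_iff.mpr hne
      obtain ⟨j, hj⟩ := hsupp hmem
      exact Sum.inr_ne_inl hj
    rw [hrepr] at hz
    simp [hz]
  exact ⟨k, l, e, B, P, hPunit, hBsymm, hdet, hmain⟩
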